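/- Let a ∈ (-1,1) \ {0}, ξ = √((a+1)/2) > 0, and define λ: ℝ \ {±ξ/√3} → ℝ by λ(x) = 2(3 - 6x^2(x^2 - ξ^2)/(3x^2 - ξ^2)^2). Then λ(x) > 14/3 for all x in its domain. -/
import Mathlib


/-- The multiplier function `λ(x) = 2(3 - 6x²(x²-ξ²)/(3x²-ξ²)²)`, `ξ = √((a+1)/2)`,
satisfies `λ(x) > 14/3` on its domain `ℝ \ {±ξ/√3}`. -/
theorem stmt8 (a : ℝ) (ha1 : -1 < a) (ha2 : a < 1) (ha0 : a ≠ 0)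
    (x : ℝ)
    (hx1 : x ≠ Real.sqrt ((a + 1) / 2) / Real.sqrt 3)
    (hx2 : x ≠ -(Real.sqrt ((a + 1) / 2) / Real.sqrt 3)) :
    2 * (3 - 6 * x ^ 2 * (x ^ 2 - Real.sqrt ((a + 1) / 2) ^ 2)
        / (3 * x ^ 2 - Real.sqrt ((a + 1) / 2) ^ 2) ^ 2) > 14 / 3 := by
  set ξ := Real.sqrt ((a + 1) / 2) with hξ
  have hs0 : (0:ℝ) < (a + 1) / 2 := by linarith
  have hs : ξ ^ 2 = (a + 1) / 2 := Real.sq_sqrt hs0.le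
  have h3 : (Real.sqrt 3) ^ 2 = 3 := Real.sq_sqrt (by norm_num)
  have hxne : 3 * x ^ 2 - ξ ^ 2 ≠ 0 := by
    intro h
    have hfac : (x - ξ / Real.sqrt 3) * (x + ξ / Real.sqrt 3) = 0 := by
      have h3ne : (Real.sqrt 3) ≠ 0 := by
        intro h0; rw [h0] at h3; norm_num at h3
      field_simp
      nlinarith [h3]
    rcases mul_eq_zero.mp hfac with h1 | h1
    · exact hx1 (by linarith)
    · exact hx2 (by linarith)
  have hD : (0:ℝ) < (3 * x ^ 2 - ξ ^ 2) ^ 2 := pow_two_pos_of_ne_zero hxne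
  rw [gt_iff_lt, ← sub_pos]
  have key : 2 * (3 - 6 * x ^ 2 * (x ^ 2 - ξ ^ 2) / (3 * x ^ 2 - ξ ^ 2) ^ 2) - 14 / 3
      = (4 * ξ ^ 2 * x ^ 2 + 4 / 3 * ξ ^ 2 * ξ ^ 2) / (3 * x ^ 2 - ξ ^ 2) ^ 2 := by
    field_simp
    ring
  rw [key]
  apply div_pos _ hD
  nlinarith [sq_nonneg x, hs0, hs]
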